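/- Let 1 ≤ s < ∞, δ > 0, 0 < r < 1, z ∈ R^n, and let K satisfy the L^s Hörmander-type condition: for all j ∈ N and |y - z| < r, (∫_{A_j(z,r)} |K(x,y) - K(x,z)|^s dx)^{1/s} ≤ C |A_j(z,r)|^{1/s - 1} 2^{-jδ}, where A_j(z,r) = {2^j r ≤ |x - z| < 2^{j+1} r}. If a ∈ L^1 is supported in B(z, r) with ∫ a = 0 and ∫|a| ≤ r^{-n(1/p - 1)}, and λ < n(s-1) + sδ, then ∫_{|x-z| ≥ 2r} |Ta(x)|^s |x - z|^λ dx ≤ C' r^{λ + n(1 - s/p)}, where Ta(x) = ∫ K(x,y) a(y) dy for x outside 2B. -/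

import Mathlib

open MeasureTheory Metric ENNReal


lemma jensen_mul {α : Type*} [MeasurableSpace α] {μ : Measure α} {f w : α → ℝ≥0∞}
    (hf : AEMeasurable f μ) (hw : AEMeasurable w μ) {s : ℝ} (hs : 1 ≤ s) :
    (∫⁻ y, f y * w y ∂μ) ^ s ≤ (∫⁻ y, w y ∂μ) ^ (s - 1) * ∫⁻ y, f y ^ s * w y ∂μ := by
  rcases eq_or_lt_of_le hs with h1 | h1
  · simp [← h1]
  · have hs0 : s ≠ 0 := by linarith
    have hq := Real.HolderConjugate.conjExponent h1
    set q := Real.conjExponent s with hqdef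
    have hinv : s⁻¹ + q⁻¹ = 1 := hq.inv_add_inv_eq_one
    have hqpos : 0 < q := hq.symm.pos
    have h1q : 1/s + 1/q = 1 := by rw [one_div, one_div]; exact hinv
    have key := ENNReal.lintegral_mul_le_Lp_mul_Lq μ hq
      (f := fun y => f y * w y ^ (1/s)) (g := fun y => w y ^ (1/q))
      (hf.mul (hw.pow_const _)) (hw.pow_const _)
    have e1 : ∫⁻ y, ((fun y => f y * w y ^ (1/s)) * fun y => w y ^ (1/q)) y ∂μ
        = ∫⁻ y, f y * w y ∂μ := by
      refine lintegral_congr fun y => ?_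
      simp only [Pi.mul_apply]
      rw [mul_assoc, ← ENNReal.rpow_add_of_nonneg _ _ (by positivity) (by positivity), h1q,
        ENNReal.rpow_one]
    have e2 : ∫⁻ y, (f y * w y ^ (1/s)) ^ s ∂μ = ∫⁻ y, f y ^ s * w y ∂μ := by
      refine lintegral_congr fun y => ?_
      rw [ENNReal.mul_rpow_of_nonneg _ _ (by positivity), ← ENNReal.rpow_mul,
        one_div_mul_cancel hs0, ENNReal.rpow_one]
    have e3 : ∫⁻ y, (w y ^ (1/q)) ^ q ∂μ = ∫⁻ y, w y ∂μ := by
      refine lintegral_congr fun y => ?_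
      rw [← ENNReal.rpow_mul, one_div_mul_cancel (ne_of_gt hqpos), ENNReal.rpow_one]
    rw [e1, e2, e3] at key
    calc (∫⁻ y, f y * w y ∂μ) ^ s
        ≤ ((∫⁻ y, f y ^ s * w y ∂μ) ^ (1/s) * (∫⁻ y, w y ∂μ) ^ (1/q)) ^ s :=
          ENNReal.rpow_le_rpow key (by positivity)
      _ = (∫⁻ y, w y ∂μ) ^ (s - 1) * ∫⁻ y, f y ^ s * w y ∂μ := by
          rw [ENNReal.mul_rpow_of_nonneg _ _ (by positivity), ← ENNReal.rpow_mul,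
            ← ENNReal.rpow_mul, one_div_mul_cancel hs0, ENNReal.rpow_one,
            show 1/q * s = s - 1 by
              have hq1 : 1/q = 1 - 1/s := by linarith [h1q]
              rw [hq1, sub_mul, one_mul, one_div, inv_mul_cancel₀ hs0]]
          ring



lemma annulus_vol (n : ℕ) (hn : 0 < n) (z : EuclideanSpace ℝ (Fin n)) (ρ : ℝ) (hρ : 0 < ρ) :
    (volume (ball (0:EuclideanSpace ℝ (Fin n)) 1)).toReal / 2 * ρ ^ n
      ≤ (volume {x : EuclideanSpace ℝ (Fin n) | ρ ≤ ‖x - z‖ ∧ ‖x - z‖ < 2 * ρ}).toReal := by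
  set S := {x : EuclideanSpace ℝ (Fin n) | ρ ≤ ‖x - z‖ ∧ ‖x - z‖ < 2 * ρ} with hS
  have hsub : closedBall z ((3/2) * ρ) \ closedBall z ρ ⊆ S := by
    rintro x ⟨hx1, hx2⟩
    rw [mem_closedBall, dist_eq_norm] at hx1 hx2
    exact ⟨le_of_not_ge hx2, lt_of_le_of_lt hx1 (by nlinarith)⟩
  have hSfin : volume S ≠ ⊤ := by
    refine ne_top_of_le_ne_top (measure_closedBall_lt_top (x := z) (r := 2 * ρ)).ne
      (measure_mono ?_)
    rintro x ⟨hx1, hx2⟩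
    rw [mem_closedBall, dist_eq_norm]
    exact hx2.le
  have hdiff : volume (closedBall z ((3/2) * ρ) \ closedBall z ρ)
      = volume (closedBall z ((3/2) * ρ)) - volume (closedBall z ρ) :=
    measure_diff (closedBall_subset_closedBall (by nlinarith))
      measurableSet_closedBall.nullMeasurableSet measure_closedBall_lt_top.ne
  have hfr : Module.finrank ℝ (EuclideanSpace ℝ (Fin n)) = n := finrank_euclideanSpace_fin
  have hcb : ∀ R : ℝ, 0 ≤ R → volume (closedBall z R)
      = ENNReal.ofReal (R ^ n) * volume (ball (0:EuclideanSpace ℝ (Fin n)) 1) := by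
    intro R hR
    rw [Measure.addHaar_closedBall volume z hR, hfr]
  set ι := (volume (ball (0:EuclideanSpace ℝ (Fin n)) 1)).toReal with hι
  have hιpos : 0 < ι := ENNReal.toReal_pos (measure_ball_pos volume 0 one_pos).ne'
    measure_ball_lt_top.ne
  have hmono := ENNReal.toReal_mono hSfin (le_trans (le_of_eq hdiff.symm) (measure_mono hsub))
  refine le_trans ?_ hmono
  rw [hcb _ (by positivity), hcb _ hρ.le,
    ← ENNReal.sub_mul (fun _ _ => measure_ball_lt_top.ne), ENNReal.toReal_mul,
    ← ENNReal.ofReal_sub _ (by positivity), ENNReal.toReal_ofReal (by nlinarith [pow_le_pow_left₀ hρ.le (by nlinarith : ρ ≤ (3/2)*ρ) n])]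
  have h32 : (3/2 : ℝ) ≤ (3/2) ^ n := le_self_pow₀ (by norm_num) hn.ne'
  have key : ρ ^ n / 2 ≤ ((3/2) * ρ) ^ n - ρ ^ n := by
    rw [mul_pow]
    nlinarith [pow_pos hρ n, pow_nonneg hρ.le n]
  calc ι / 2 * ρ ^ n = ρ ^ n / 2 * ι := by ring
    _ ≤ (((3/2) * ρ) ^ n - ρ ^ n) * ι := by nlinarith

lemma annulus_cover {r t : ℝ} (hr : 0 < r) (ht : 2 * r ≤ t) :
    ∃ j : ℕ, 2 ^ (j+1) * r ≤ t ∧ t < 2 ^ (j+2) * r := by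
  classical
  have hP : ∃ m : ℕ, t < 2 ^ m * r := by
    obtain ⟨m, hm⟩ := pow_unbounded_of_one_lt (t / r) (by norm_num : (1:ℝ) < 2)
    exact ⟨m, by rw [div_lt_iff₀ hr] at hm; linarith⟩
  set N := Nat.find hP with hN
  have hspec : t < 2 ^ N * r := Nat.find_spec hP
  have h2 : 2 ≤ N := by
    by_contra h
    push_neg at h
    have hN01 : N = 0 ∨ N = 1 := by omega
    rcases hN01 with h0 | h0 <;> rw [h0] at hspec <;> norm_num at hspec <;> linarith
  refine ⟨N - 2, ?_, ?_⟩
  · have h1 : ¬ (t < 2 ^ (N-1) * r) := Nat.find_min hP (by omega)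
    push_neg at h1
    have : N - 2 + 1 = N - 1 := by omega
    rw [this]; exact h1
  · have : N - 2 + 2 = N := by omega
    rw [this]; exact hspec


lemma pow_l_bound {r t : ℝ} (l : ℝ) (hr : 0 < r) (k : ℕ) (h1 : 2^k * r ≤ t)
    (h2 : t < 2^(k+1)*r) :
    t ^ l ≤ (2:ℝ)^|l| * (2:ℝ)^((k:ℝ)*l) * r^l := by
  have hb : (0:ℝ) < 2^k * r := by positivity
  have e : ((2:ℝ)^k * r) ^ l = (2:ℝ)^((k:ℝ)*l) * r^l := by
    rw [Real.mul_rpow (by positivity) hr.le, ← Real.rpow_natCast (2:ℝ) k,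
      ← Real.rpow_mul (by norm_num)]
  rcases le_or_gt 0 l with hl0 | hl0
  · have h3 : t ^ l ≤ ((2:ℝ)^(k+1) * r) ^ l :=
      Real.rpow_le_rpow (le_trans hb.le h1) h2.le hl0
    have e2 : ((2:ℝ)^(k+1) * r) ^ l = (2:ℝ)^l * ((2:ℝ)^((k:ℝ)*l) * r^l) := by
      rw [pow_succ, mul_comm ((2:ℝ)^k) 2, mul_assoc,
        Real.mul_rpow (by norm_num) (by positivity), e]
    have h4 : (2:ℝ)^l ≤ (2:ℝ)^|l| := Real.rpow_le_rpow_of_exponent_le one_le_two (le_abs_self l)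
    rw [e2] at h3
    have hp1 : (0:ℝ) ≤ (2:ℝ)^((k:ℝ)*l) * r^l := by positivity
    nlinarith
  · have h3 : t ^ l ≤ ((2:ℝ)^k * r) ^ l := Real.rpow_le_rpow_of_nonpos hb h1 hl0.le
    have h4 : (1:ℝ) ≤ (2:ℝ)^|l| := Real.one_le_rpow one_le_two (abs_nonneg l)
    rw [e] at h3
    have hp1 : (0:ℝ) ≤ (2:ℝ)^((k:ℝ)*l) * r^l := by positivity
    nlinarith

lemma real_bound (n : ℕ) (s δ l C c r M V : ℝ) (k : ℕ)
    (hs : 1 ≤ s) (hC : 0 < C) (hc : 0 < c) (hr : 0 < r) (hM : 0 ≤ M)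
    (hV : c * ((2:ℝ)^k * r)^n ≤ V) :
    M^s * (((2:ℝ)^|l| * (2:ℝ)^((k:ℝ)*l) * r^l) * (C * V^(1/s-1) * (2:ℝ)^(-(k:ℝ)*δ))^s)
      ≤ ((2:ℝ)^|l| * C^s * c^(1-s)) * (M^s * r^(l + (n:ℝ)*(1-s)))
        * (2:ℝ)^((k:ℝ)*(l - ((n:ℝ)*(s-1) + s*δ))) := by
  have hs0 : (0:ℝ) < s := lt_of_lt_of_le one_pos hs
  have hV0 : (0:ℝ) < V := lt_of_lt_of_le (by positivity) hV
  have hBr : (C * V^(1/s-1) * (2:ℝ)^(-(k:ℝ)*δ))^s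
      ≤ C^s * (c^(1-s) * (2:ℝ)^((k:ℝ)*(n:ℝ)*(1-s)) * r^((n:ℝ)*(1-s))) * (2:ℝ)^(-(k:ℝ)*δ*s) := by
    rw [Real.mul_rpow (by positivity) (by positivity),
      Real.mul_rpow hC.le (by positivity)]
    have e1 : (V^(1/s-1))^s = V^(1-s) := by
      rw [← Real.rpow_mul hV0.le]
      congr 1
      field_simp
    have e2 : ((2:ℝ)^(-(k:ℝ)*δ))^s = (2:ℝ)^(-(k:ℝ)*δ*s) := by
      rw [← Real.rpow_mul (by norm_num)]
    rw [e1, e2]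
    have e4 : (c * ((2:ℝ)^k*r)^n)^(1-s)
        = c^(1-s) * (2:ℝ)^((k:ℝ)*(n:ℝ)*(1-s)) * r^((n:ℝ)*(1-s)) := by
      rw [mul_pow, ← pow_mul, ← Real.rpow_natCast (2:ℝ) (k*n), ← Real.rpow_natCast r n,
        Real.mul_rpow hc.le (by positivity),
        Real.mul_rpow (by positivity) (by positivity),
        ← Real.rpow_mul (by norm_num), ← Real.rpow_mul hr.le]
      push_cast
      ring_nf
    have e3 : V^(1-s) ≤ c^(1-s) * (2:ℝ)^((k:ℝ)*(n:ℝ)*(1-s)) * r^((n:ℝ)*(1-s)) := by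
      have h1 : V^(1-s) ≤ (c * ((2:ℝ)^k*r)^n)^(1-s) :=
        Real.rpow_le_rpow_of_nonpos (by positivity) hV (by linarith)
      rw [e4] at h1
      exact h1
    have hCs : (0:ℝ) ≤ C^s := (Real.rpow_pos_of_pos hC s).le
    have h2k : (0:ℝ) ≤ (2:ℝ)^(-(k:ℝ)*δ*s) := (Real.rpow_pos_of_pos two_pos _).le
    exact mul_le_mul_of_nonneg_right (mul_le_mul_of_nonneg_left e3 hCs) h2k
  have key : M^s * (((2:ℝ)^|l| * (2:ℝ)^((k:ℝ)*l) * r^l)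
      * (C^s * (c^(1-s) * (2:ℝ)^((k:ℝ)*(n:ℝ)*(1-s)) * r^((n:ℝ)*(1-s))) * (2:ℝ)^(-(k:ℝ)*δ*s)))
      = ((2:ℝ)^|l| * C^s * c^(1-s)) * (M^s * r^(l + (n:ℝ)*(1-s)))
        * (2:ℝ)^((k:ℝ)*(l - ((n:ℝ)*(s-1) + s*δ))) := by
    rw [show (k:ℝ)*(l - ((n:ℝ)*(s-1)+s*δ))
        = (k:ℝ)*l + ((k:ℝ)*(n:ℝ)*(1-s) + (-(k:ℝ)*δ*s)) from by ring,
      Real.rpow_add two_pos, Real.rpow_add two_pos, Real.rpow_add hr l ((n:ℝ)*(1-s))]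
    ring
  rw [← key]
  have hMs : (0:ℝ) ≤ M^s := Real.rpow_nonneg hM s
  have hWr : (0:ℝ) ≤ (2:ℝ)^|l| * (2:ℝ)^((k:ℝ)*l) * r^l := by positivity
  exact mul_le_mul_of_nonneg_left (mul_le_mul_of_nonneg_left hBr hWr) hMs

/-- Tail estimate (M2) for `Ta`: under the `L^s` Hörmander-type condition on the
kernel and for `a` supported in `B(z,r)` with vanishing integral and
`∫|a| ≤ r^{-n(1/p-1)}`, one has
`∫_{|x-z| ≥ 2r} |Ta(x)|^s |x-z|^λ dx ≤ C' r^{λ + n(1 - s/p)}` whenever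
`λ < n(s-1) + sδ`. -/
theorem stmt19 (n : ℕ) (p s δ l C : ℝ)
    (hp : 0 < p) (hp1 : p ≤ 1) (hs : 1 ≤ s) (hps : p < s)
    (hδ : 0 < δ) (hC : 0 < C) (hl : l < (n : ℝ) * (s - 1) + s * δ) :
    ∃ C' : ℝ, 0 < C' ∧
      ∀ (K : EuclideanSpace ℝ (Fin n) → EuclideanSpace ℝ (Fin n) → ℂ)
        (a : EuclideanSpace ℝ (Fin n) → ℂ)
        (z : EuclideanSpace ℝ (Fin n)) (r : ℝ),
        0 < r → r < 1 → Measurable (Function.uncurry K) → Integrable a →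
        (∀ x, x ∉ ball z r → a x = 0) →
        (∫ x, a x) = 0 →
        (∫ x, ‖a x‖) ≤ r ^ (-((n : ℝ) * (1 / p - 1))) →
        (∀ j : ℕ, ∀ y, ‖y - z‖ < r →
          (∫⁻ x in {x : EuclideanSpace ℝ (Fin n) |
              2 ^ j * r ≤ ‖x - z‖ ∧ ‖x - z‖ < 2 ^ (j + 1) * r},
            (‖K x y - K x z‖₊ : ℝ≥0∞) ^ s) ^ (1 / s)
          ≤ ENNReal.ofReal (C *
              (volume {x : EuclideanSpace ℝ (Fin n) |
                2 ^ j * r ≤ ‖x - z‖ ∧ ‖x - z‖ < 2 ^ (j + 1) * r}).toReal ^ (1 / s - 1) *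
              2 ^ (-(j : ℝ) * δ))) →
        ∫⁻ x in {x : EuclideanSpace ℝ (Fin n) | 2 * r ≤ ‖x - z‖},
            (‖∫ y, K x y * a y‖₊ : ℝ≥0∞) ^ s * ENNReal.ofReal (‖x - z‖ ^ l)
          ≤ ENNReal.ofReal (C' * r ^ (l + (n : ℝ) * (1 - s / p))) := by
  rcases Nat.eq_zero_or_pos n with hn | hn
  · subst hn
    refine ⟨1, one_pos, ?_⟩
    intro K a z r hr _ _ _ _ _ _ _
    have hempty : {x : EuclideanSpace ℝ (Fin 0) | 2 * r ≤ ‖x - z‖} = ∅ := by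
      ext x
      simp only [Set.mem_setOf_eq, Set.mem_empty_iff_false, iff_false, not_le]
      rw [Subsingleton.elim x z]
      simp
      linarith
    rw [hempty]
    simp
  · have hs0 : (0:ℝ) < s := lt_of_lt_of_le one_pos hs
    set θ := l - ((n:ℝ)*(s-1) + s*δ) with hθdef
    have hθ : θ < 0 := by rw [hθdef]; linarith
    set qg := (2:ℝ) ^ θ with hqgdef
    have hqg0 : 0 < qg := Real.rpow_pos_of_pos two_pos θ
    have hqg1 : qg < 1 := Real.rpow_lt_one_of_one_lt_of_neg one_lt_two hθ
    set c := (volume (ball (0:EuclideanSpace ℝ (Fin n)) 1)).toReal / 2 with hcdef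
    have hcpos : 0 < c := by
      have : 0 < (volume (ball (0:EuclideanSpace ℝ (Fin n)) 1)).toReal :=
        ENNReal.toReal_pos (measure_ball_pos volume 0 one_pos).ne' measure_ball_lt_top.ne
      positivity
    set D := (2:ℝ)^|l| * C ^ s * c ^ (1 - s) with hDdef
    have hDpos : 0 < D := by
      have h1 : (0:ℝ) < (2:ℝ)^|l| := Real.rpow_pos_of_pos two_pos _
      have h2 : (0:ℝ) < C ^ s := Real.rpow_pos_of_pos hC _
      have h3 : (0:ℝ) < c ^ (1-s) := Real.rpow_pos_of_pos hcpos _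
      positivity
    set E2 := (1 - qg)⁻¹ with hE2def
    have hE2pos : 0 < E2 := by rw [hE2def]; exact inv_pos.2 (by linarith)
    refine ⟨D * E2, by positivity, ?_⟩
    intro K a z r hr hr1 hK ha hsupp hzero hnorm hHor
    -- basic quantities
    set M := ∫ y, ‖a y‖ with hMdef
    have hM0 : 0 ≤ M := integral_nonneg fun y => norm_nonneg _
    set Ma := ENNReal.ofReal M with hMadef
    have hMatop : Ma ≠ ⊤ := ofReal_ne_top
    -- measurable representative of a
    set a₀ := ha.1.mk a with ha₀def
    have hm₀ : Measurable a₀ := ha.1.stronglyMeasurable_mk.measurable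
    have haeq : a =ᵐ[volume] a₀ := ha.1.ae_eq_mk
    set w := fun y => (‖a₀ y‖₊ : ℝ≥0∞) with hwdef
    have hwm : Measurable w := hm₀.enorm
    have hweq : (fun y => (‖a y‖₊:ℝ≥0∞)) =ᵐ[volume] w := haeq.mono fun y hy => by
      rw [hwdef]; simp only [hy]
    have hMw : ∫⁻ y, w y = Ma := by
      rw [← lintegral_congr_ae hweq, hMadef, hMdef,
        ofReal_integral_norm_eq_lintegral_enorm ha]
      rfl
    set g := fun (x y : EuclideanSpace ℝ (Fin n)) => (‖K x y - K x z‖₊ : ℝ≥0∞) with hgdef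
    have hgm : Measurable (Function.uncurry g) := by
      exact Measurable.enorm (hK.sub (hK.comp (measurable_fst.prodMk measurable_const)))
    -- Step A + B : pointwise bound
    have hTa : ∀ x, (‖∫ y, K x y * a y‖₊ : ℝ≥0∞) ^ s
        ≤ Ma ^ (s-1) * ∫⁻ y, (g x y) ^ s * w y := by
      intro x
      have hA' : (‖∫ y, K x y * a y‖₊ : ℝ≥0∞) ≤ ∫⁻ y, g x y * (‖a y‖₊:ℝ≥0∞) := by
        by_cases hi : Integrable (fun y => K x y * a y)
        · have hKz : Integrable (fun y => K x z * a y) := ha.const_mul _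
          have heq : ∫ y, K x y * a y = ∫ y, (K x y - K x z) * a y := by
            have e : ∀ y : EuclideanSpace ℝ (Fin n),
                (K x y - K x z) * a y = K x y * a y - K x z * a y := fun y => by ring
            simp only [e]
            rw [integral_sub hi hKz, integral_const_mul, hzero, mul_zero, sub_zero]
          rw [heq]
          refine le_trans (enorm_integral_le_lintegral_enorm _) (le_of_eq ?_)
          refine lintegral_congr fun y => ?_
          rw [hgdef]
          simp [nnnorm_mul, ENNReal.coe_mul]
          rfl
        · rw [integral_undef hi]
          simp
      have hA : (‖∫ y, K x y * a y‖₊ : ℝ≥0∞) ≤ ∫⁻ y, g x y * w y :=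
        hA'.trans (le_of_eq (lintegral_congr_ae (hweq.mono fun y hy => by dsimp only at hy ⊢; rw [hy])))
      calc (‖∫ y, K x y * a y‖₊ : ℝ≥0∞) ^ s ≤ (∫⁻ y, g x y * w y) ^ s :=
            ENNReal.rpow_le_rpow hA hs0.le
        _ ≤ (∫⁻ y, w y) ^ (s-1) * ∫⁻ y, g x y ^ s * w y :=
            jensen_mul (hgm.of_uncurry_left).aemeasurable hwm.aemeasurable hs
        _ = Ma ^ (s-1) * ∫⁻ y, g x y ^ s * w y := by rw [hMw]
    -- annuli
    set A : ℕ → Set (EuclideanSpace ℝ (Fin n)) :=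
      fun k => {x | 2^k * r ≤ ‖x-z‖ ∧ ‖x-z‖ < 2^(k+1) * r} with hAdef
    have hAm : ∀ k, MeasurableSet (A k) := by
      intro k
      have : A k = (fun x => ‖x - z‖) ⁻¹' (Set.Ico (2^k*r) (2^(k+1)*r)) := rfl
      rw [this]
      exact (((continuous_id.sub continuous_const).norm).measurable) measurableSet_Ico
    have hVol : ∀ k : ℕ, c * ((2:ℝ)^k * r) ^ n ≤ (volume (A k)).toReal := by
      intro k
      have h2 : {x : EuclideanSpace ℝ (Fin n) | (2:ℝ)^k * r ≤ ‖x - z‖ ∧ ‖x - z‖ < 2 * ((2:ℝ)^k * r)} = A k := by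
        rw [hAdef]
        norm_num [pow_succ]
        ring_nf
      have := annulus_vol n hn z ((2:ℝ)^k * r) (by positivity)
      rw [h2] at this
      exact this
    -- Step C : per-annulus estimate
    have hSC : ∀ k : ℕ, ∫⁻ x in A k, (‖∫ y, K x y * a y‖₊ : ℝ≥0∞) ^ s * ENNReal.ofReal (‖x - z‖ ^ l)
        ≤ ENNReal.ofReal (D * (M ^ s * r ^ (l + (n:ℝ)*(1-s))) * (2:ℝ)^((k:ℝ)*θ)) := by
      intro k
      set V := (volume (A k)).toReal with hVdef
      set Wr := (2:ℝ)^|l| * (2:ℝ)^((k:ℝ)*l) * r^l with hWrdef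
      have hWr0 : 0 ≤ Wr := by positivity
      set W := ENNReal.ofReal Wr with hWdef
      set Br := C * V ^ (1/s - 1) * (2:ℝ)^(-(k:ℝ)*δ) with hBrdef
      have hV00 : 0 ≤ V := ENNReal.toReal_nonneg
      have hBr0 : 0 ≤ Br := by positivity
      set B := ENNReal.ofReal Br ^ s with hBdef
      have hBne : B ≠ ⊤ := ENNReal.rpow_ne_top_of_nonneg hs0.le ofReal_ne_top
      have hconst_ne : Ma ^ (s-1) * W ≠ ⊤ :=
        ENNReal.mul_ne_top (ENNReal.rpow_ne_top_of_nonneg (by linarith) hMatop) ofReal_ne_top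
      have step1 : ∫⁻ x in A k, (‖∫ y, K x y * a y‖₊ : ℝ≥0∞) ^ s * ENNReal.ofReal (‖x - z‖ ^ l)
          ≤ ∫⁻ x in A k, (Ma ^ (s-1) * W) * ∫⁻ y, g x y ^ s * w y := by
        refine lintegral_mono_ae ((ae_restrict_iff' (hAm k)).2
          (Filter.Eventually.of_forall fun x hx => ?_))
        have hW : ENNReal.ofReal (‖x - z‖ ^ l) ≤ W :=
          ENNReal.ofReal_le_ofReal (pow_l_bound l hr k hx.1 hx.2)
        calc (‖∫ y, K x y * a y‖₊ : ℝ≥0∞) ^ s * ENNReal.ofReal (‖x - z‖ ^ l)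
            ≤ (Ma ^ (s-1) * ∫⁻ y, g x y ^ s * w y) * W := mul_le_mul' (hTa x) hW
          _ = (Ma ^ (s-1) * W) * ∫⁻ y, g x y ^ s * w y := by ring
      have step2 : ∫⁻ x in A k, (Ma ^ (s-1) * W) * ∫⁻ y, g x y ^ s * w y
          = (Ma ^ (s-1) * W) * ∫⁻ x in A k, ∫⁻ y, g x y ^ s * w y :=
        lintegral_const_mul' _ _ hconst_ne
      have step3 : ∫⁻ x in A k, ∫⁻ y, g x y ^ s * w y
          = ∫⁻ y, (∫⁻ x in A k, g x y ^ s) * w y := by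
        rw [lintegral_lintegral_swap
          (((hgm.pow_const s).mul (hwm.comp measurable_snd)).aemeasurable)]
        refine lintegral_congr fun y => ?_
        exact lintegral_mul_const' _ _ ENNReal.coe_ne_top
      have step4 : ∫⁻ y, (∫⁻ x in A k, g x y ^ s) * w y ≤ ∫⁻ y, B * w y := by
        refine lintegral_mono_ae (haeq.mono fun y hy => ?_)
        by_cases hwy : w y = 0
        · rw [hwy, mul_zero, mul_zero]
        · have hay : a y ≠ 0 := by
            intro h0
            apply hwy
            rw [hwdef]
            dsimp only
            rw [← hy, h0]
            simp
          have hyz : ‖y - z‖ < r := by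
            by_contra hcon
            exact hay (hsupp y (by rw [mem_ball, dist_eq_norm]; rwa [not_lt] at hcon ⊢))
          have hH := hHor k y hyz
          have hle : ∫⁻ x in A k, g x y ^ s ≤ B := by
            have h5 := ENNReal.rpow_le_rpow hH hs0.le
            rwa [← ENNReal.rpow_mul, one_div_mul_cancel hs0.ne', ENNReal.rpow_one] at h5
          gcongr
      have step5 : ∫⁻ y, B * w y = B * Ma := by
        rw [lintegral_const_mul' _ _ hBne, hMw]
      have total : ∫⁻ x in A k, (‖∫ y, K x y * a y‖₊ : ℝ≥0∞) ^ s * ENNReal.ofReal (‖x - z‖ ^ l)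
          ≤ (Ma ^ (s-1) * W) * (B * Ma) := by
        calc ∫⁻ x in A k, (‖∫ y, K x y * a y‖₊ : ℝ≥0∞) ^ s * ENNReal.ofReal (‖x - z‖ ^ l)
            ≤ ∫⁻ x in A k, (Ma ^ (s-1) * W) * ∫⁻ y, g x y ^ s * w y := step1
          _ = (Ma ^ (s-1) * W) * ∫⁻ x in A k, ∫⁻ y, g x y ^ s * w y := step2
          _ = (Ma ^ (s-1) * W) * ∫⁻ y, (∫⁻ x in A k, g x y ^ s) * w y := by rw [step3]
          _ ≤ (Ma ^ (s-1) * W) * ∫⁻ y, B * w y := by gcongr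
          _ = (Ma ^ (s-1) * W) * (B * Ma) := by rw [step5]
      refine total.trans ?_
      have hMas : Ma ^ (s-1) * Ma = ENNReal.ofReal (M ^ s) := by
        nth_rewrite 2 [← ENNReal.rpow_one Ma]
        rw [← ENNReal.rpow_add_of_nonneg _ _ (by linarith) zero_le_one]
        rw [show s - 1 + 1 = s from by ring, hMadef,
          ENNReal.ofReal_rpow_of_nonneg hM0 hs0.le]
      have hBval : B = ENNReal.ofReal (Br ^ s) := by
        rw [hBdef, ENNReal.ofReal_rpow_of_nonneg hBr0 hs0.le]
      have eqn : (Ma ^ (s-1) * W) * (B * Ma)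
          = ENNReal.ofReal (M ^ s * (Wr * Br ^ s)) := by
        calc (Ma ^ (s-1) * W) * (B * Ma) = (Ma ^ (s-1) * Ma) * (W * B) := by ring
          _ = ENNReal.ofReal (M ^ s) * (ENNReal.ofReal Wr * ENNReal.ofReal (Br ^ s)) := by
              rw [hMas, hWdef, hBval]
          _ = ENNReal.ofReal (M ^ s * (Wr * Br ^ s)) := by
              rw [← ENNReal.ofReal_mul hWr0, ← ENNReal.ofReal_mul (Real.rpow_nonneg hM0 s)]
      rw [eqn]
      refine ENNReal.ofReal_le_ofReal ?_
      have := real_bound n s δ l C c r M V k hs hC hcpos hr hM0 (hVol k)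
      rw [hDdef, hθdef]
      exact this
    -- covering
    have hcover : {x : EuclideanSpace ℝ (Fin n) | 2 * r ≤ ‖x - z‖} ⊆ ⋃ j : ℕ, A (j+1) := by
      intro x hx
      obtain ⟨j, hj1, hj2⟩ := annulus_cover hr hx
      exact Set.mem_iUnion.2 ⟨j, hj1, hj2⟩
    -- final sum
    calc ∫⁻ x in {x : EuclideanSpace ℝ (Fin n) | 2 * r ≤ ‖x - z‖},
            (‖∫ y, K x y * a y‖₊ : ℝ≥0∞) ^ s * ENNReal.ofReal (‖x - z‖ ^ l)
        ≤ ∫⁻ x in ⋃ j : ℕ, A (j+1),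
            (‖∫ y, K x y * a y‖₊ : ℝ≥0∞) ^ s * ENNReal.ofReal (‖x - z‖ ^ l) :=
          lintegral_mono' (Measure.restrict_mono hcover le_rfl) le_rfl
      _ ≤ ∑' j : ℕ, ∫⁻ x in A (j+1),
            (‖∫ y, K x y * a y‖₊ : ℝ≥0∞) ^ s * ENNReal.ofReal (‖x - z‖ ^ l) :=
          lintegral_iUnion_le _ _
      _ ≤ ∑' j : ℕ, ENNReal.ofReal (D * (M ^ s * r ^ (l + (n:ℝ)*(1-s))) * (2:ℝ)^(((j:ℝ)+1)*θ)) := by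
          refine ENNReal.tsum_le_tsum fun j => ?_
          have := hSC (j+1)
          push_cast at this
          exact this
      _ ≤ ENNReal.ofReal (D * E2 * r ^ (l + (n:ℝ) * (1 - s/p))) := by
          set T := D * (M ^ s * r ^ (l + (n:ℝ)*(1-s))) with hTdef
          have hMs0 : 0 ≤ M ^ s := Real.rpow_nonneg hM0 s
          have hT0 : 0 ≤ T := by positivity
          have e_term : ∀ j : ℕ, ENNReal.ofReal (T * (2:ℝ)^(((j:ℝ)+1)*θ))
              = ENNReal.ofReal (T * qg) * (ENNReal.ofReal qg) ^ j := by
            intro j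
            have e : (2:ℝ)^(((j:ℝ)+1)*θ) = qg * qg ^ j := by
              rw [hqgdef, ← Real.rpow_natCast ((2:ℝ)^θ) j, ← Real.rpow_mul (by norm_num),
                ← Real.rpow_add two_pos]
              congr 1
              ring
            rw [e, ← mul_assoc, ENNReal.ofReal_mul (by positivity),
              ENNReal.ofReal_pow hqg0.le]
          calc ∑' j : ℕ, ENNReal.ofReal (T * (2:ℝ)^(((j:ℝ)+1)*θ))
              = ∑' j : ℕ, ENNReal.ofReal (T * qg) * (ENNReal.ofReal qg) ^ j :=
                tsum_congr e_term
            _ = ENNReal.ofReal (T * qg) * ∑' j : ℕ, (ENNReal.ofReal qg) ^ j :=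
                ENNReal.tsum_mul_left
            _ = ENNReal.ofReal (T * qg) * (1 - ENNReal.ofReal qg)⁻¹ := by
                rw [ENNReal.tsum_geometric]
            _ = ENNReal.ofReal (T * qg) * ENNReal.ofReal E2 := by
                rw [← ENNReal.ofReal_one, ← ENNReal.ofReal_sub _ hqg0.le,
                  ← ENNReal.ofReal_inv_of_pos (by linarith), hE2def]
            _ = ENNReal.ofReal (T * qg * E2) := by
                rw [← ENNReal.ofReal_mul (by positivity)]
            _ ≤ ENNReal.ofReal (D * E2 * r ^ (l + (n:ℝ) * (1 - s/p))) := by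
                refine ENNReal.ofReal_le_ofReal ?_
                have h1 : M ^ s * r ^ (l + (n:ℝ)*(1-s)) ≤ r ^ (l + (n:ℝ)*(1 - s/p)) := by
                  have h2 : M ^ s ≤ (r ^ (-((n:ℝ) * (1/p - 1)))) ^ s :=
                    Real.rpow_le_rpow hM0 hnorm hs0.le
                  have h3 : (r ^ (-((n:ℝ) * (1/p - 1)))) ^ s
                      = r ^ (-((n:ℝ) * (1/p - 1)) * s) := by
                    rw [← Real.rpow_mul hr.le]
                  have h4 : r ^ (-((n:ℝ) * (1/p - 1)) * s) * r ^ (l + (n:ℝ)*(1-s))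
                      = r ^ (l + (n:ℝ)*(1 - s/p)) := by
                    rw [← Real.rpow_add hr]
                    congr 1
                    field_simp
                    ring
                  calc M ^ s * r ^ (l + (n:ℝ)*(1-s))
                      ≤ r ^ (-((n:ℝ) * (1/p - 1)) * s) * r ^ (l + (n:ℝ)*(1-s)) := by
                        rw [← h3]
                        exact mul_le_mul_of_nonneg_right h2 (Real.rpow_nonneg hr.le _)
                    _ = _ := h4
                have hr2 : 0 ≤ r ^ (l + (n:ℝ)*(1-s)) := Real.rpow_nonneg hr.le _
                calc T * qg * E2 ≤ T * 1 * E2 := by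
                      refine mul_le_mul_of_nonneg_right (mul_le_mul_of_nonneg_left hqg1.le hT0) hE2pos.le
                  _ = D * (M ^ s * r ^ (l + (n:ℝ)*(1-s))) * E2 := by rw [hTdef]; ring
                  _ ≤ D * r ^ (l + (n:ℝ)*(1 - s/p)) * E2 := by
                      refine mul_le_mul_of_nonneg_right (mul_le_mul_of_nonneg_left h1 hDpos.le) hE2pos.le
                  _ = D * E2 * r ^ (l + (n:ℝ) * (1 - s/p)) := by ring
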